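/- Under the decomposition δ_k = α_k + β_k with |α_k| ≤ u_p and |β_k| ≤ u_{p+r}, the product of rounding-error factors satisfies ∏_{k=i}^n (1+δ_k) = ∏_{k=i}^n (1+α_k) + B_i, where B_i = Σ_{K ⊊ I_i} (∏_{j∈K}(1+α_j))(∏_{j∈I_i\K} β_j) and |B_i| ≤ γ_{n-i+1}(u_p + u_{p+r}) - γ_{n-i+1}(u_p). -/
import Mathlib


/-- Lemma 3.9 (second part): under the decomposition `δ_k = α_k + β_k` with
`|α_k| ≤ u_p` and `|β_k| ≤ u_{p+r}` for `i ≤ k ≤ n`, the product of rounding-error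
factors satisfies `∏_{k=i}^n (1+δ_k) = ∏_{k=i}^n (1+α_k) + B_i`, where
`B_i = Σ_{K ⊊ I_i} (∏_{j∈K}(1+α_j))(∏_{j∈I_i\K} β_j)` and
`|B_i| ≤ γ_{n-i+1}(u_p + u_{p+r}) - γ_{n-i+1}(u_p)` with `γ_m(x) = (1+x)^m - 1`. -/
theorem product_decomposition (i n : ℕ) (hin : i ≤ n) (up upr : ℝ)
    (hup : 0 < up) (hupr : 0 < upr)
    (δ α β : ℕ → ℝ)
    (hδ : ∀ k ∈ Finset.Icc i n, δ k = α k + β k)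
    (hα : ∀ k ∈ Finset.Icc i n, |α k| ≤ up)
    (hβ : ∀ k ∈ Finset.Icc i n, |β k| ≤ upr) :
    (∏ k ∈ Finset.Icc i n, (1 + δ k) =
      ∏ k ∈ Finset.Icc i n, (1 + α k) +
        ∑ K ∈ (Finset.Icc i n).powerset.filter (fun K => K ≠ Finset.Icc i n),
          (∏ j ∈ K, (1 + α j)) * ∏ j ∈ Finset.Icc i n \ K, β j) ∧
    |∑ K ∈ (Finset.Icc i n).powerset.filter (fun K => K ≠ Finset.Icc i n),
        (∏ j ∈ K, (1 + α j)) * ∏ j ∈ Finset.Icc i n \ K, β j|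
      ≤ ((1 + (up + upr)) ^ (n - i + 1) - 1) - ((1 + up) ^ (n - i + 1) - 1) := by
  set s := Finset.Icc i n with hs
  have hcard : s.card = n - i + 1 := by
    rw [hs, Nat.card_Icc]; omega
  -- general splitting of a sum over the powerset
  have hsplit : ∀ f : Finset ℕ → ℝ,
      ∑ K ∈ s.powerset, f K = f s + ∑ K ∈ s.powerset.filter (fun K => K ≠ s), f K := by
    intro f
    rw [← Finset.sum_filter_add_sum_filter_not s.powerset (fun K => K = s)]
    congr 1
    rw [Finset.filter_eq', if_pos (Finset.mem_powerset_self s), Finset.sum_singleton]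
  have key : ∏ k ∈ s, (1 + δ k)
      = ∑ K ∈ s.powerset, (∏ j ∈ K, (1 + α j)) * ∏ j ∈ s \ K, β j := by
    rw [show ∏ k ∈ s, (1 + δ k) = ∏ k ∈ s, ((1 + α k) + β k) from
      Finset.prod_congr rfl fun k hk => by rw [hδ k hk]; ring]
    exact Finset.prod_add _ _ _
  constructor
  · rw [key, hsplit]
    simp
  · have hbound : ∀ K ∈ s.powerset.filter (fun K => K ≠ s),
        |(∏ j ∈ K, (1 + α j)) * ∏ j ∈ s \ K, β j|
          ≤ (1 + up) ^ K.card * upr ^ (s \ K).card := by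
      intro K hK
      simp only [Finset.mem_filter, Finset.mem_powerset] at hK
      rw [abs_mul, Finset.abs_prod, Finset.abs_prod]
      have h1 : ∏ j ∈ K, |1 + α j| ≤ (1 + up) ^ K.card := by
        rw [← Finset.prod_const]
        refine Finset.prod_le_prod (fun j _ => abs_nonneg _) fun j hj => ?_
        calc |1 + α j| ≤ |(1:ℝ)| + |α j| := abs_add_le _ _
          _ ≤ 1 + up := by simpa using hα j (hK.1 hj)
      have h2 : ∏ j ∈ s \ K, |β j| ≤ upr ^ (s \ K).card := by
        rw [← Finset.prod_const]
        refine Finset.prod_le_prod (fun j _ => abs_nonneg _) fun j hj => ?_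
        exact hβ j (Finset.mem_sdiff.mp hj).1
      exact mul_le_mul h1 h2 (Finset.prod_nonneg fun j _ => abs_nonneg _)
        (pow_nonneg (by linarith) _)
    have hsum : ∑ K ∈ s.powerset.filter (fun K => K ≠ s),
        (1 + up) ^ K.card * upr ^ (s \ K).card
          = (1 + (up + upr)) ^ (n - i + 1) - (1 + up) ^ (n - i + 1) := by
      have := hsplit (fun K => (1 + up) ^ K.card * upr ^ (s \ K).card)
      have htot : ∑ K ∈ s.powerset, (1 + up) ^ K.card * upr ^ (s \ K).card
          = (1 + (up + upr)) ^ (n - i + 1) := by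
        have := Finset.prod_add (fun _ : ℕ => (1 + up)) (fun _ : ℕ => upr) s
        simp only [Finset.prod_const] at this
        rw [← this, hcard]
        ring_nf
      rw [htot] at this
      simp only [Finset.sdiff_self, Finset.card_empty, pow_zero, mul_one, hcard] at this
      linarith
    calc |∑ K ∈ s.powerset.filter (fun K => K ≠ s),
            (∏ j ∈ K, (1 + α j)) * ∏ j ∈ s \ K, β j|
        ≤ ∑ K ∈ s.powerset.filter (fun K => K ≠ s),
            |(∏ j ∈ K, (1 + α j)) * ∏ j ∈ s \ K, β j| := Finset.abs_sum_le_sum_abs _ _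
      _ ≤ ∑ K ∈ s.powerset.filter (fun K => K ≠ s),
            (1 + up) ^ K.card * upr ^ (s \ K).card := Finset.sum_le_sum hbound
      _ = (1 + (up + upr)) ^ (n - i + 1) - (1 + up) ^ (n - i + 1) := hsum
      _ ≤ _ := by linarith
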